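/- (Generalized Laguerre inversion) For all parameters α, p, q and all n ≥ 0: Σ_{k=0}^{n} L_k^{(α+p)}(x) · L_{n-k}^{(-α-q)}(-x) = (p-q+2)_n / n!. -/

import Mathlib

open Finset Real

/-- Pochhammer symbol (rising factorial) `(a)_k`. -/
noncomputable def poch (a : ℝ) (k : ℕ) : ℝ := (ascPochhammer ℝ k).eval a

/-- Classical Laguerre polynomial `L_n^{(α)}(x)` for arbitrary parameter α. -/
noncomputable def lag (α : ℝ) (n : ℕ) (x : ℝ) : ℝ :=
  ∑ k ∈ Finset.range (n + 1),
    (-1 : ℝ) ^ k * (poch (α + k + 1) (n - k) / (Nat.factorial (n - k))) *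
      x ^ k / (Nat.factorial k)

/-- Classical Jacobi polynomial `P_n^{(α,β)}(x)` for arbitrary parameters. -/
noncomputable def jac (α β : ℝ) (n : ℕ) (x : ℝ) : ℝ :=
  ∑ k ∈ Finset.range (n + 1),
    (poch ((n : ℝ) + α + β + 1) k / (Nat.factorial k)) *
      (poch (α + k + 1) (n - k) / (Nat.factorial (n - k))) * ((x - 1) / 2) ^ k

/-- Generalized binomial coefficient `C(x, k)`. -/
noncomputable def genBinom (x : ℝ) (k : ℕ) : ℝ :=
  (∏ j ∈ Finset.range k, (x - j)) / (Nat.factorial k)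

/-- Charlier polynomial `C_n^{(a)}(x)`. -/
noncomputable def charlier (a : ℝ) (n : ℕ) (x : ℝ) : ℝ :=
  ∑ k ∈ Finset.range (n + 1), genBinom x k * (-a) ^ (n - k) / (Nat.factorial (n - k))

lemma poch_zero (a : ℝ) : poch a 0 = 1 := by simp [poch]

lemma poch_succ (a : ℝ) (n : ℕ) : poch a (n + 1) = poch a n * (a + n) := by
  simp [poch, ascPochhammer_succ_eval]

lemma vdm_choose (N : ℕ) (u v : ℝ) :
    ∑ r ∈ range (N + 1), (N.choose r : ℝ) * poch u r * poch v (N - r) = poch (u + v) N := by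
  induction N generalizing u v with
  | zero => simp [poch_zero]
  | succ m ih =>
    have h1 : ∑ r ∈ range (m + 2), ((m+1).choose r : ℝ) * poch u r * poch v (m + 1 - r)
        = (∑ i ∈ range (m + 1), (m.choose i : ℝ) * poch u (i+1) * poch v (m - i))
          + ∑ r ∈ range (m + 2), (m.choose r : ℝ) * poch u r * poch v (m + 1 - r) := by
      rw [Finset.sum_range_succ' (fun r => ((m+1).choose r : ℝ) * poch u r * poch v (m + 1 - r)) (m+1),
        Finset.sum_range_succ' (fun r => ((m).choose r : ℝ) * poch u r * poch v (m + 1 - r)) (m+1)]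
      simp only [Nat.choose_succ_succ, Nat.cast_add, Nat.succ_sub_succ, Nat.choose_zero_right,
        Nat.cast_one, add_mul]
      rw [Finset.sum_add_distrib]
      ring
    have h2 : ∑ r ∈ range (m + 2), (m.choose r : ℝ) * poch u r * poch v (m + 1 - r)
        = ∑ r ∈ range (m + 1), (m.choose r : ℝ) * poch u r * (poch v (m - r) * (v + (m - r : ℕ))) := by
      rw [Finset.sum_range_succ, Nat.choose_succ_self, Nat.cast_zero]
      simp only [zero_mul, add_zero]
      refine Finset.sum_congr rfl fun r hr => ?_
      have hrm : r ≤ m := Nat.lt_succ_iff.mp (Finset.mem_range.mp hr)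
      rw [show m + 1 - r = (m - r) + 1 from by omega, poch_succ]
    have h3 : ∀ r ∈ range (m+1),
        (m.choose r : ℝ) * poch u (r+1) * poch v (m - r)
          + (m.choose r : ℝ) * poch u r * (poch v (m - r) * (v + (m - r : ℕ)))
        = (u + v + m) * ((m.choose r : ℝ) * poch u r * poch v (m - r)) := by
      intro r hr
      have hrm : r ≤ m := Nat.lt_succ_iff.mp (Finset.mem_range.mp hr)
      rw [poch_succ, Nat.cast_sub hrm]
      ring
    rw [h1, h2, ← Finset.sum_add_distrib, Finset.sum_congr rfl h3, ← Finset.mul_sum, ih,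
      poch_succ]
    ring

lemma vdm_div (N : ℕ) (u v : ℝ) :
    ∑ r ∈ range (N + 1), poch u r / (Nat.factorial r) * (poch v (N - r) / (Nat.factorial (N - r)))
      = poch (u + v) N / (Nat.factorial N) := by
  rw [← vdm_choose, Finset.sum_div]
  refine Finset.sum_congr rfl fun r hr => ?_
  have hrm : r ≤ N := Nat.lt_succ_iff.mp (Finset.mem_range.mp hr)
  have hfact : (N.choose r : ℝ) * (Nat.factorial r) * (Nat.factorial (N - r)) = Nat.factorial N := by
    exact_mod_cast congrArg (Nat.cast : ℕ → ℝ) (Nat.choose_mul_factorial_mul_factorial hrm)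
  have h1 : (Nat.factorial r : ℝ) ≠ 0 := Nat.cast_ne_zero.mpr (Nat.factorial_ne_zero r)
  have h2 : (Nat.factorial (N - r) : ℝ) ≠ 0 := Nat.cast_ne_zero.mpr (Nat.factorial_ne_zero _)
  have h3 : (Nat.factorial N : ℝ) ≠ 0 := Nat.cast_ne_zero.mpr (Nat.factorial_ne_zero _)
  have h4 : (N.choose r : ℝ) ≠ 0 := Nat.cast_ne_zero.mpr (Nat.choose_pos hrm).ne'
  rw [← hfact]
  field_simp

/-- Derivative of the Laguerre polynomial. -/
noncomputable def lagD : ℝ → ℕ → ℝ → ℝ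
  | _, 0, _ => 0
  | α, (m+1), x => -lag (α+1) m x

lemma lag_zero_eval (α : ℝ) (n : ℕ) : lag α n 0 = poch (α + 1) n / (Nat.factorial n) := by
  unfold lag
  rw [Finset.sum_eq_single 0]
  · simp
  · intro k _ hk
    rcases Nat.exists_eq_succ_of_ne_zero hk with ⟨j, rfl⟩
    simp [pow_succ]
  · intro h; simp at h

lemma lag_hasDerivAt (α : ℝ) (n : ℕ) (x : ℝ) :
    HasDerivAt (fun y => lag α n y) (lagD α n x) x := by
  have h : HasDerivAt (fun y => lag α n y)
      (∑ k ∈ Finset.range (n + 1),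
        ((-1 : ℝ) ^ k * (poch (α + k + 1) (n - k) / (Nat.factorial (n - k))) *
          ((k : ℝ) * x ^ (k - 1)) / (Nat.factorial k))) x := by
    unfold lag
    exact HasDerivAt.fun_sum fun k _ =>
      (((hasDerivAt_pow k x).const_mul
        ((-1 : ℝ) ^ k * (poch (α + k + 1) (n - k) / (Nat.factorial (n - k))))).div_const _)
  convert h using 1
  cases n with
  | zero => simp [lagD]
  | succ m =>
    rw [Finset.sum_range_succ' (fun k => ((-1 : ℝ) ^ k *
      (poch (α + k + 1) (m + 1 - k) / (Nat.factorial (m + 1 - k))) *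
      ((k : ℝ) * x ^ (k - 1)) / (Nat.factorial k))) (m+1)]
    simp only [Nat.cast_zero, zero_mul, mul_zero, zero_div, add_zero, Nat.succ_sub_succ,
      Nat.add_sub_cancel, Nat.sub_zero]
    rw [show lagD α (m+1) x = -lag (α+1) m x from rfl, lag, ← Finset.sum_neg_distrib]
    refine Finset.sum_congr rfl fun i _ => ?_
    have harg : α + 1 + (i : ℝ) + 1 = α + ((i : ℝ) + 1) + 1 := by ring
    rw [harg]
    have hfac : ((Nat.factorial (i+1) : ℝ)) = ((i:ℝ)+1) * (Nat.factorial i) := by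
      push_cast [Nat.factorial_succ]; ring
    have hne : ((i:ℝ)+1) ≠ 0 := by positivity
    have hfne : ((Nat.factorial i : ℝ)) ≠ 0 := Nat.cast_ne_zero.mpr (Nat.factorial_ne_zero i)
    push_cast
    rw [hfac]
    field_simp
    ring

lemma key (n : ℕ) : ∀ a b x : ℝ,
    ∑ k ∈ Finset.range (n + 1), lag a k x * lag b (n - k) (-x)
      = poch (a + b + 2) n / (Nat.factorial n) := by
  induction n with
  | zero => intro a b x; simp [lag, poch]
  | succ m ih =>
    intro a b x
    have hder : ∀ y : ℝ, HasDerivAt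
        (fun y => ∑ k ∈ Finset.range (m + 2), lag a k y * lag b (m + 1 - k) (-y)) 0 y := by
      intro y
      have hterm : ∀ k ∈ Finset.range (m + 2),
          HasDerivAt (fun y => lag a k y * lag b (m + 1 - k) (-y))
            (lagD a k y * lag b (m+1-k) (-y) + lag a k y * (lagD b (m+1-k) (-y) * (-1))) y := by
        intro k _
        have h2 : HasDerivAt (fun y : ℝ => lag b (m+1-k) (-y)) (lagD b (m+1-k) (-y) * (-1)) y :=
          (lag_hasDerivAt b (m+1-k) (-y)).comp y (hasDerivAt_neg y)
        exact (lag_hasDerivAt a k y).mul h2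
      have h := HasDerivAt.fun_sum hterm
      have hzero : (∑ k ∈ Finset.range (m + 2),
          (lagD a k y * lag b (m+1-k) (-y) + lag a k y * (lagD b (m+1-k) (-y) * (-1)))) = 0 := by
        rw [Finset.sum_add_distrib]
        have hS1 : ∑ k ∈ Finset.range (m + 2), lagD a k y * lag b (m+1-k) (-y)
            = -(poch (a + b + 3) m / (Nat.factorial m)) := by
          rw [Finset.sum_range_succ' (fun k => lagD a k y * lag b (m+1-k) (-y)) (m+1)]
          simp only [Nat.succ_sub_succ]
          rw [show lagD a 0 y = 0 from rfl]
          have : ∀ i ∈ Finset.range (m+1), lagD a (i+1) y * lag b (m-i) (-y)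
              = -(lag (a+1) i y * lag b (m-i) (-y)) := by
            intro i _
            rw [show lagD a (i+1) y = -lag (a+1) i y from rfl]; ring
          rw [Finset.sum_congr rfl this, Finset.sum_neg_distrib, ih (a+1) b y]
          rw [show a + 1 + b + 2 = a + b + 3 from by ring]
          ring
        have hS2 : ∑ k ∈ Finset.range (m + 2), lag a k y * (lagD b (m+1-k) (-y) * (-1))
            = poch (a + b + 3) m / (Nat.factorial m) := by
          rw [Finset.sum_range_succ]
          rw [show m + 1 - (m+1) = 0 from by omega, show lagD b 0 (-y) = 0 from rfl]
          have : ∀ k ∈ Finset.range (m+1), lag a k y * (lagD b (m+1-k) (-y) * (-1))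
              = lag a k y * lag (b+1) (m-k) (-y) := by
            intro k hk
            have hkm : k ≤ m := Nat.lt_succ_iff.mp (Finset.mem_range.mp hk)
            rw [show m + 1 - k = (m - k) + 1 from by omega,
              show lagD b ((m-k)+1) (-y) = -lag (b+1) (m-k) (-y) from rfl]
            ring
          rw [Finset.sum_congr rfl this, ih a (b+1) y,
            show a + (b+1) + 2 = a + b + 3 from by ring]
          simp
        rw [hS1, hS2]
        ring
      rw [← hzero]
      exact h
    have hconst : (∑ k ∈ Finset.range (m + 2), lag a k x * lag b (m + 1 - k) (-x))
        = ∑ k ∈ Finset.range (m + 2), lag a k 0 * lag b (m + 1 - k) (-0) :=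
      is_const_of_deriv_eq_zero (fun y => (hder y).differentiableAt)
        (fun y => (hder y).deriv) x 0
    rw [hconst]
    have : ∀ k ∈ Finset.range (m + 2), lag a k 0 * lag b (m + 1 - k) (-0)
        = poch (a+1) k / (Nat.factorial k) * (poch (b+1) (m + 1 - k) / (Nat.factorial (m + 1 - k))) := by
      intro k _
      rw [neg_zero, lag_zero_eval, lag_zero_eval]
    rw [Finset.sum_congr rfl this, vdm_div (m+1) (a+1) (b+1),
      show a + 1 + (b + 1) = a + b + 2 from by ring]

theorem stmt11 (α p q : ℝ) (n : ℕ) (x : ℝ) :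
    ∑ k ∈ Finset.range (n + 1), lag (α + p) k x * lag (-α - q) (n - k) (-x) =
      poch (p - q + 2) n / (Nat.factorial n) := by
  have h := key n (α + p) (-α - q) x
  rwa [show α + p + (-α - q) + 2 = p - q + 2 from by ring] at h
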